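/- Let 0 < σ₁ < σ₂, N ≥ 2, and let f_j (j=1,2) be C² solutions of f_j'' + ((N-1)/r) f_j' - (1/σ_j) f_j = 0 on (0,∞) with f₁'(ρ) = f₂'(ρ) = 0 and f₁(ρ) = f₂(ρ) < 0. If there exists s ∈ (0,ρ) such that f₁(s) = f₂(s) and f₁(r) < f₂(r) for every r ∈ (s,ρ), then f₁'(s) < 0 and f₂'(s) < 0. -/

import Mathlib

lemma aux_hasDerivAt (σ : ℝ) (hσ : 0 < σ) (m : ℕ) (f : ℝ → ℝ)
    (hreg : ContDiffOn ℝ 2 f (Set.Ioi 0))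
    (hode : ∀ r ∈ Set.Ioi (0 : ℝ),
      deriv (deriv f) r + ((m : ℝ) + 1) / r * deriv f r - (1 / σ) * f r = 0)
    (x : ℝ) (hx : 0 < x) :
    HasDerivAt (fun r => σ * (r ^ (m + 1) * deriv f r)) (x ^ (m + 1) * f x) x := by
  have hxne : x ≠ 0 := ne_of_gt hx
  have hσne : σ ≠ 0 := ne_of_gt hσ
  have hC : ContDiffOn ℝ 1 (deriv f) (Set.Ioi 0) :=
    hreg.deriv_of_isOpen isOpen_Ioi (by norm_num)
  have h2 : HasDerivAt (deriv f) (deriv (deriv f) x) x := by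
    have := (hC.differentiableOn (by norm_num)).differentiableAt
      (isOpen_Ioi.mem_nhds (by exact hx))
    exact this.hasDerivAt
  have h1 : HasDerivAt (fun r : ℝ => r ^ (m + 1)) (((m : ℝ) + 1) * x ^ m) x := by
    simpa using hasDerivAt_pow (m + 1) x
  have key : HasDerivAt (fun r => σ * (r ^ (m + 1) * deriv f r))
      (σ * (((m : ℝ) + 1) * x ^ m * deriv f x + x ^ (m + 1) * deriv (deriv f) x)) x :=
    (h1.mul h2).const_mul σ
  convert key using 1
  have hd2 : deriv (deriv f) x = (1 / σ) * f x - ((m : ℝ) + 1) / x * deriv f x := by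
    have := hode x hx; linarith
  rw [hd2, pow_succ]
  field_simp
  ring

theorem stmt_8 (σ₁ σ₂ : ℝ) (hσ₁ : 0 < σ₁) (hσ₁₂ : σ₁ < σ₂) (N : ℕ) (hN : 2 ≤ N)
    (f₁ f₂ : ℝ → ℝ)
    (hreg₁ : ContDiffOn ℝ 2 f₁ (Set.Ioi 0)) (hreg₂ : ContDiffOn ℝ 2 f₂ (Set.Ioi 0))
    (hode₁ : ∀ r ∈ Set.Ioi (0 : ℝ),
      deriv (deriv f₁) r + ((N : ℝ) - 1) / r * deriv f₁ r - (1 / σ₁) * f₁ r = 0)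
    (hode₂ : ∀ r ∈ Set.Ioi (0 : ℝ),
      deriv (deriv f₂) r + ((N : ℝ) - 1) / r * deriv f₂ r - (1 / σ₂) * f₂ r = 0)
    (ρ : ℝ) (hρ : 0 < ρ)
    (ρ : ℝ) (hρ : 0 < ρ)
    (hder : deriv f₁ ρ = 0) (hder' : deriv f₂ ρ = 0)
    (hval : f₁ ρ = f₂ ρ) (hvneg : f₁ ρ < 0)
    (s : ℝ) (hs : s ∈ Set.Ioo 0 ρ)
    (hvs : f₁ s = f₂ s) (hlt : ∀ r ∈ Set.Ioo s ρ, f₁ r < f₂ r) :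
    deriv f₁ s < 0 ∧ deriv f₂ s < 0 := by
  obtain ⟨hs0, hsρ⟩ := hs
  set m : ℕ := N - 2 with hm
  have hNm : (N : ℝ) - 1 = (m : ℝ) + 1 := by
    have : N - 2 + 1 = N - 1 := by omega
    have h2 : ((N - 1 : ℕ) : ℝ) = (N : ℝ) - 1 := by
      push_cast [Nat.cast_sub (by omega : 1 ≤ N)]; ring
    rw [← h2, ← this]; push_cast; ring
  have hode₁' : ∀ r ∈ Set.Ioi (0 : ℝ),
      deriv (deriv f₁) r + ((m : ℝ) + 1) / r * deriv f₁ r - (1 / σ₁) * f₁ r = 0 := by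
    intro r hr; rw [← hNm]; exact hode₁ r hr
  have hode₂' : ∀ r ∈ Set.Ioi (0 : ℝ),
      deriv (deriv f₂) r + ((m : ℝ) + 1) / r * deriv f₂ r - (1 / σ₂) * f₂ r = 0 := by
    intro r hr; rw [← hNm]; exact hode₂ r hr
  have hσ₂ : 0 < σ₂ := hσ₁.trans hσ₁₂
  -- g is increasing on [s, ρ]
  set g : ℝ → ℝ := fun r => σ₂ * (r ^ (m + 1) * deriv f₂ r) - σ₁ * (r ^ (m + 1) * deriv f₁ r)
    with hg
  have hgd : ∀ x ∈ Set.Ioi (0 : ℝ),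
      HasDerivAt g (x ^ (m + 1) * f₂ x - x ^ (m + 1) * f₁ x) x := by
    intro x hx
    exact (aux_hasDerivAt σ₂ hσ₂ m f₂ hreg₂ hode₂' x hx).sub
      (aux_hasDerivAt σ₁ hσ₁ m f₁ hreg₁ hode₁' x hx)
  have hIcc : Set.Icc s ρ ⊆ Set.Ioi (0 : ℝ) := fun x hx => lt_of_lt_of_le hs0 hx.1
  have hcont : ContinuousOn g (Set.Icc s ρ) := fun x hx =>
    ((hgd x (hIcc hx)).continuousAt).continuousWithinAt
  have hmono : StrictMonoOn g (Set.Icc s ρ) := by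
    apply strictMonoOn_of_deriv_pos (convex_Icc s ρ) hcont
    intro x hx
    rw [interior_Icc] at hx
    have hx0 : (0 : ℝ) < x := hs0.trans hx.1
    rw [(hgd x hx0).deriv]
    have := hlt x hx
    have hp : (0 : ℝ) < x ^ (m + 1) := pow_pos hx0 _
    nlinarith
  have hgρ : g ρ = 0 := by simp [hg, hder, hder']
  have hgs : g s < 0 := by
    have := hmono (Set.left_mem_Icc.2 hsρ.le) (Set.right_mem_Icc.2 hsρ.le) hsρ
    rwa [hgρ] at this
  have hkey : σ₂ * deriv f₂ s < σ₁ * deriv f₁ s := by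
    have hp : (0 : ℝ) < s ^ (m + 1) := pow_pos hs0 _
    simp only [hg] at hgs
    nlinarith
  -- derivative comparison at s: deriv f₁ s ≤ deriv f₂ s
  have hd₁ : HasDerivAt f₁ (deriv f₁ s) s :=
    ((hreg₁.differentiableOn (by norm_num)).differentiableAt
      (isOpen_Ioi.mem_nhds hs0)).hasDerivAt
  have hd₂ : HasDerivAt f₂ (deriv f₂ s) s :=
    ((hreg₂.differentiableOn (by norm_num)).differentiableAt
      (isOpen_Ioi.mem_nhds hs0)).hasDerivAt
  have hdle : deriv f₁ s ≤ deriv f₂ s := by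
    have hh : HasDerivAt (fun r => f₂ r - f₁ r) (deriv f₂ s - deriv f₁ s) s := hd₂.sub hd₁
    have htend : Filter.Tendsto (slope (fun r => f₂ r - f₁ r) s) (nhdsWithin s (Set.Ioi s))
        (nhds (deriv f₂ s - deriv f₁ s)) :=
      (hasDerivAt_iff_tendsto_slope.mp hh).mono_left
        (nhdsWithin_mono s (fun x hx => ne_of_gt hx))
    have hev : ∀ᶠ x in nhdsWithin s (Set.Ioi s),
        0 ≤ slope (fun r => f₂ r - f₁ r) s x := by
      filter_upwards [Ioo_mem_nhdsGT_of_mem (Set.left_mem_Ico.2 hsρ)] with x hx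
      have h1 : 0 < f₂ x - f₁ x := sub_pos.2 (hlt x hx)
      have h2 : 0 < x - s := sub_pos.2 hx.1
      rw [slope_def_field]
      have : f₂ s - f₁ s = 0 := by rw [hvs]; ring
      rw [this, sub_zero]
      positivity
    have : 0 ≤ deriv f₂ s - deriv f₁ s := ge_of_tendsto htend hev
    linarith
  have h2 : deriv f₂ s < 0 := by nlinarith
  exact ⟨lt_of_le_of_lt hdle h2, h2⟩
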